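/- For ρ, r, ϑ, Θ > 0 and u, U ∈ ℝ³, the relative energy for the perfect gas, E(ρ,ϑ,u | r,Θ,U) = ½ρ|u−U|² + ρc_vϑ − Θρ log(ϑ^{c_v}/ρ) − (∂_ρ H_Θ)(r,Θ)(ρ − r) − H_Θ(r,Θ), where H_Θ(ρ,ϑ) = ρc_vϑ − Θρ log(ϑ^{c_v}/ρ), satisfies E(ρ,ϑ,u | r,Θ,U) ≥ 0, with equality if and only if ρ = r, ϑ = Θ, u = U. -/

import Mathlib

open Real

/-- The ballistic free energy of the perfect gas,
`H_Θ(ρ,ϑ) = ρ e(ρ,ϑ) - Θ ρ s(ρ,ϑ)` with `e = c_vϑ`, `s = log(ϑ^{c_v}/ρ)`. -/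
noncomputable def ballisticH (c_v Θ ρ ϑ : ℝ) : ℝ :=
  ρ * (c_v * ϑ) - Θ * ρ * Real.log (ϑ ^ c_v / ρ)

/-- The relative energy for the perfect gas, built from the ballistic free energy. -/
noncomputable def relEnergy (c_v : ℝ) (ρ ϑ : ℝ) (u : EuclideanSpace ℝ (Fin 3))
    (r Θ : ℝ) (U : EuclideanSpace ℝ (Fin 3)) : ℝ :=
  (1 / 2) * ρ * ‖u - U‖ ^ 2 + ρ * (c_v * ϑ) - Θ * ρ * Real.log (ϑ ^ c_v / ρ)
    - deriv (fun x : ℝ => ballisticH c_v Θ x Θ) r * (ρ - r) - ballisticH c_v Θ r Θ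

lemma key_ineq (x : ℝ) (hx : 0 < x) :
    0 ≤ x - 1 - Real.log x ∧ (x - 1 - Real.log x = 0 ↔ x = 1) := by
  constructor
  · have := Real.log_le_sub_one_of_pos hx
    linarith
  · constructor
    · intro h
      by_contra hne
      have := Real.log_lt_sub_one_of_pos hx hne
      linarith
    · rintro rfl; simp

lemma derivH (c_v Θ r : ℝ) (hΘ : 0 < Θ) (hr : 0 < r) :
    deriv (fun x : ℝ => ballisticH c_v Θ x Θ) r
      = c_v * Θ - Θ * (c_v * Real.log Θ - (Real.log r + 1)) := by
  have hev : (fun x : ℝ => ballisticH c_v Θ x Θ)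
      =ᶠ[nhds r] fun x => x * (c_v * Θ) - Θ * (x * (c_v * Real.log Θ) - x * Real.log x) := by
    filter_upwards [eventually_gt_nhds hr] with x hx
    unfold ballisticH
    rw [Real.log_div (by positivity) hx.ne', Real.log_rpow hΘ]
    ring
  rw [hev.deriv_eq]
  have h1 : HasDerivAt (fun x : ℝ => x * (c_v * Θ)) (1 * (c_v * Θ)) r :=
    (hasDerivAt_id r).mul_const _
  have h2 : HasDerivAt (fun x : ℝ => x * (c_v * Real.log Θ)) (1 * (c_v * Real.log Θ)) r :=
    (hasDerivAt_id r).mul_const _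
  have h3 : HasDerivAt (fun x : ℝ => x * Real.log x) (1 * Real.log r + r * r⁻¹) r :=
    (hasDerivAt_id r).mul (Real.hasDerivAt_log hr.ne')
  have : deriv (fun x : ℝ => x * (c_v * Θ) - Θ * (x * (c_v * Real.log Θ) - x * Real.log x)) r
      = 1 * (c_v * Θ) - Θ * (1 * (c_v * Real.log Θ) - (1 * Real.log r + r * r⁻¹)) :=
    (h1.sub (((h2.sub h3)).const_mul Θ)).deriv
  rw [this]
  field_simp

set_option maxHeartbeats 1000000 in
/-- Nonnegativity and strict coercivity of the relative energy of the perfect gas: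
`E(ρ,ϑ,u | r,Θ,U) ≥ 0`, with equality iff `ρ = r`, `ϑ = Θ`, `u = U`. -/
theorem stmt_13 (c_v : ℝ) (hcv : 0 < c_v) (ρ r ϑ Θ : ℝ)
    (hρ : 0 < ρ) (hr : 0 < r) (hϑ : 0 < ϑ) (hΘ : 0 < Θ)
    (u U : EuclideanSpace ℝ (Fin 3)) :
    0 ≤ relEnergy c_v ρ ϑ u r Θ U ∧
      (relEnergy c_v ρ ϑ u r Θ U = 0 ↔ ρ = r ∧ ϑ = Θ ∧ u = U) := by
  have hE : relEnergy c_v ρ ϑ u r Θ U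
      = (1 / 2) * ρ * ‖u - U‖ ^ 2
        + ρ * c_v * Θ * (ϑ / Θ - 1 - Real.log (ϑ / Θ))
        + Θ * ρ * (r / ρ - 1 - Real.log (r / ρ)) := by
    unfold relEnergy
    rw [derivH c_v Θ r hΘ hr]
    unfold ballisticH
    rw [
      Real.log_div (by positivity) hρ.ne', Real.log_rpow hϑ,
      Real.log_div (by positivity : (Θ:ℝ) ^ c_v ≠ 0) hr.ne', Real.log_rpow hΘ,
      Real.log_div hϑ.ne' hΘ.ne', Real.log_div hr.ne' hρ.ne']
    field_simp
    ring
  obtain ⟨hB, hBeq⟩ := key_ineq (ϑ / Θ) (by positivity)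
  obtain ⟨hC, hCeq⟩ := key_ineq (r / ρ) (by positivity)
  have hA : 0 ≤ (1 / 2) * ρ * ‖u - U‖ ^ 2 := by positivity
  have hBc : 0 ≤ ρ * c_v * Θ := by positivity
  have hCc : 0 ≤ Θ * ρ := by positivity
  constructor
  · rw [hE]; positivity
  · rw [hE]
    constructor
    · intro h
      have hB0 : ρ * c_v * Θ * (ϑ / Θ - 1 - Real.log (ϑ / Θ)) = 0 := by
        nlinarith [mul_nonneg hBc hB, mul_nonneg hCc hC]
      have hC0 : Θ * ρ * (r / ρ - 1 - Real.log (r / ρ)) = 0 := by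
        nlinarith [mul_nonneg hBc hB, mul_nonneg hCc hC]
      have hA0 : (1 / 2) * ρ * ‖u - U‖ ^ 2 = 0 := by
        nlinarith [mul_nonneg hBc hB, mul_nonneg hCc hC]
      refine ⟨?_, ?_, ?_⟩
      · have : r / ρ = 1 := hCeq.1 (by
          have : (r / ρ - 1 - Real.log (r / ρ)) = 0 := by
            have hne : Θ * ρ ≠ 0 := by positivity
            exact (mul_eq_zero.1 hC0).resolve_left hne
          linarith)
        field_simp at this
        linarith
      · have : ϑ / Θ = 1 := hBeq.1 (by
          have hne : ρ * c_v * Θ ≠ 0 := by positivity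
          have := (mul_eq_zero.1 hB0).resolve_left hne
          linarith)
        field_simp at this
        linarith
      · have h2 : ‖u - U‖ ^ 2 = 0 := by
          have hne : (1 / 2 : ℝ) * ρ ≠ 0 := by positivity
          have := mul_eq_zero.1 hA0
          rcases this with h | h
          · exact absurd h hne
          · exact h
        have : ‖u - U‖ = 0 := by
          have := pow_eq_zero_iff (n := 2) (by norm_num) |>.1 h2
          exact this
        rwa [norm_sub_eq_zero_iff] at this
    · rintro ⟨rfl, rfl, rfl⟩
      have hz : ‖u - u‖ = (0:ℝ) := by rw [sub_self, norm_zero]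
      rw [hz, div_self hρ.ne', div_self hϑ.ne', Real.log_one]
      ring
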